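/- Under the stated assumptions on V, for every j ∈ ℤ and every r = 1, …, p, V_{r,j} = ṽ_{j+r} + h Σ_{ℓ=1}^{r} σ_{j+ℓ−1} Ψ̂^{(r+1−ℓ)}_{j+ℓ}. -/

import Mathlib

/-- The discrete complex stretching grid
`Z_{j,k} = (j+k)h + i(h/ω) Σ_{ℓ=0}^{k-1} σ_ℓ` (the sum being 0 for `k ≤ 0`). -/
noncomputable def Zmap (h ω : ℝ) (σ : ℤ → ℝ) (j k : ℤ) : ℂ :=
  ((j + k : ℤ) : ℂ) * (h : ℂ) +
    Complex.I * ((h : ℂ) / (ω : ℂ)) * ∑ l ∈ Finset.range k.toNat, ((σ l : ℝ) : ℂ)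

/-- Discrete holomorphicity with respect to the grid `Zmap h ω σ`: the discrete
Cauchy–Riemann equations hold on every face. -/
def DiscreteHolo (h ω : ℝ) (σ : ℤ → ℝ) (F : ℤ → ℤ → ℂ) : Prop :=
  ∀ j k : ℤ,
    (F (j + 1) (k + 1) - F j k) * (Zmap h ω σ j (k + 1) - Zmap h ω σ (j + 1) k) =
    (F j (k + 1) - F (j + 1) k) * (Zmap h ω σ (j + 1) (k + 1) - Zmap h ω σ j k)

/-- The auxiliary variable `Φ̂^{(r)}_j = (V_{−r+1,j+1} − V_{−r,j}) / (iω(2h + iσ_j h/ω))`. -/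
noncomputable def PhiAux (h ω : ℝ) (σ : ℤ → ℝ) (V : ℤ → ℤ → ℂ) (r j : ℤ) : ℂ :=
  (V (-r + 1) (j + 1) - V (-r) j) /
    (Complex.I * (ω : ℂ) * (2 * (h : ℂ) + Complex.I * (σ j : ℂ) * (h : ℂ) / (ω : ℂ)))

/-- The auxiliary variable `Ψ̂^{(r)}_j = (V_{r,j} − V_{r−1,j−1}) / (iω(2h + iσ_{j−1} h/ω))`. -/
noncomputable def PsiAux (h ω : ℝ) (σ : ℤ → ℝ) (V : ℤ → ℤ → ℂ) (r j : ℤ) : ℂ :=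
  (V r j - V (r - 1) (j - 1)) /
    (Complex.I * (ω : ℂ) * (2 * (h : ℂ) + Complex.I * (σ (j - 1) : ℂ) * (h : ℂ) / (ω : ℂ)))

lemma sigsum (σ : ℤ → ℝ) (hσneg : ∀ j : ℤ, j < 0 → σ j = 0) (k : ℤ) :
    ∑ l ∈ Finset.range (k + 1).toNat, ((σ l : ℝ) : ℂ) =
      (∑ l ∈ Finset.range k.toNat, ((σ l : ℝ) : ℂ)) + (σ k : ℂ) := by
  rcases le_or_gt 0 k with hk | hk
  · have h1 : (k + 1).toNat = k.toNat + 1 := by omega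
    rw [h1, Finset.sum_range_succ, Int.toNat_of_nonneg hk]
  · have h1 : (k + 1).toNat = 0 := by omega
    have h2 : k.toNat = 0 := by omega
    rw [h1, h2, hσneg k hk]
    simp

lemma Zd1 (h ω : ℝ) (σ : ℤ → ℝ) (hσneg : ∀ j : ℤ, j < 0 → σ j = 0) (j k : ℤ) :
    Zmap h ω σ j (k + 1) - Zmap h ω σ (j + 1) k
      = Complex.I * (σ k : ℂ) * (h : ℂ) / (ω : ℂ) := by
  unfold Zmap
  rw [sigsum σ hσneg k]
  push_cast
  ring

lemma Zd2 (h ω : ℝ) (σ : ℤ → ℝ) (hσneg : ∀ j : ℤ, j < 0 → σ j = 0) (j k : ℤ) :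
    Zmap h ω σ (j + 1) (k + 1) - Zmap h ω σ j k
      = 2 * (h : ℂ) + Complex.I * (σ k : ℂ) * (h : ℂ) / (ω : ℂ) := by
  unfold Zmap
  rw [sigsum σ hσneg k]
  push_cast
  ring

lemma keylem (h ω : ℝ) (hh : 0 < h) (hω : ω ≠ 0) (σ : ℤ → ℝ)
    (hσneg : ∀ j : ℤ, j < 0 → σ j = 0) (V : ℤ → ℤ → ℂ)
    (hholo : DiscreteHolo h ω σ V) (j k : ℤ) :
    (h : ℂ) * (σ k : ℂ) * PsiAux h ω σ V (j + 1) (k + 1) = V (j + 1) k - V j (k + 1) := by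
  have H := hholo j k
  rw [Zd1 h ω σ hσneg j k, Zd2 h ω σ hσneg j k] at H
  unfold PsiAux
  simp only [add_sub_cancel_right]
  have hD : (2 * (h : ℂ) + Complex.I * (σ k : ℂ) * (h : ℂ) / (ω : ℂ)) ≠ 0 := by
    intro hc
    have hre := congrArg Complex.re hc
    have : Complex.I * (σ k : ℂ) * (h : ℂ) / (ω : ℂ) = ((σ k * h / ω : ℝ) : ℂ) * Complex.I := by
      push_cast; ring
    rw [this] at hre
    simp [Complex.add_re, Complex.mul_re] at hre
    linarith
  have hI : (Complex.I : ℂ) ≠ 0 := Complex.I_ne_zero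
  have hωc : (ω : ℂ) ≠ 0 := by exact_mod_cast hω
  field_simp at H
  have hden : Complex.I * (ω : ℂ) * (2 * (h : ℂ) + Complex.I * (σ k : ℂ) * (h : ℂ) / (ω : ℂ))
      = -((σ k : ℂ) * (h : ℂ)) + 2 * (h : ℂ) * (ω : ℂ) * Complex.I := by
    field_simp
    linear_combination ((σ k : ℂ)*(h:ℂ)) * Complex.I_sq
  have hz : (-((σ k : ℂ) * (h : ℂ)) + 2 * (h : ℂ) * (ω : ℂ) * Complex.I) ≠ 0 := by
    intro hc
    have him := congrArg Complex.im hc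
    simp [Complex.add_im, Complex.mul_im, Complex.neg_im] at him
    rcases him with him | him <;> [linarith; exact hω him]
  have hrw : (h : ℂ) * (σ k : ℂ)
        * ((V (j+1) (k+1) - V j k) / (Complex.I * (ω : ℂ)
          * (2 * (h : ℂ) + Complex.I * (σ k : ℂ) * (h : ℂ) / (ω : ℂ))))
      = ((h : ℂ) * (σ k : ℂ) * (V (j+1) (k+1) - V j k))
        / (-((σ k : ℂ) * (h : ℂ)) + 2 * (h : ℂ) * (ω : ℂ) * Complex.I) := by
    rw [hden]; ring
  rw [hrw, div_eq_iff hz]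
  linear_combination (-Complex.I) * H
    + ((h:ℂ)*(σ k:ℂ)*(V (j+1) (k+1) - V j k) - (σ k:ℂ)*(h:ℂ)*(V j (k+1) - V (j+1) k)) * Complex.I_sq

lemma mainlem (h ω : ℝ) (hh : 0 < h) (hω : ω ≠ 0) (σ : ℤ → ℝ)
    (hσneg : ∀ j : ℤ, j < 0 → σ j = 0) (V : ℤ → ℤ → ℂ)
    (hholo : DiscreteHolo h ω σ V) :
    ∀ r : ℤ, 0 ≤ r → ∀ j : ℤ,
      V r j = V 0 (j + r) +
        (h : ℂ) * ∑ l ∈ Finset.Icc (1 : ℤ) r,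
          (σ (j + l - 1) : ℂ) * PsiAux h ω σ V (r + 1 - l) (j + l) := by
  refine Int.le_induction ?_ ?_
  · intro j; simp
  · intro r hr IH j
    have hkey := keylem h ω hh hω σ hσneg V hholo r j
    have hsplit : Finset.Icc (1 : ℤ) (r + 1)
        = insert 1 ((Finset.Icc (1 : ℤ) r).map ⟨(· + 1), add_left_injective 1⟩) := by
      ext x
      simp only [Finset.mem_insert, Finset.mem_map, Finset.mem_Icc,
        Function.Embedding.coeFn_mk]
      constructor
      · intro hx
        by_cases h1 : x = 1
        · left; exact h1
        · right; refine ⟨x - 1, ?_, ?_⟩ <;> omega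
      · rintro (rfl | ⟨y, hy, rfl⟩) <;> omega
    have hnot : (1 : ℤ) ∉ (Finset.Icc (1 : ℤ) r).map ⟨(· + 1), add_left_injective 1⟩ := by
      simp only [Finset.mem_map, Finset.mem_Icc, Function.Embedding.coeFn_mk]
      rintro ⟨y, hy, hy1⟩; omega
    rw [hsplit, Finset.sum_insert hnot, Finset.sum_map]
    simp only [Function.Embedding.coeFn_mk]
    have hsum : ∀ l ∈ Finset.Icc (1 : ℤ) r,
        (σ (j + (l + 1) - 1) : ℂ) * PsiAux h ω σ V (r + 1 + 1 - (l + 1)) (j + (l + 1))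
          = (σ (j + 1 + l - 1) : ℂ) * PsiAux h ω σ V (r + 1 - l) (j + 1 + l) := by
      intro l _
      have e1 : j + (l + 1) - 1 = j + 1 + l - 1 := by ring
      have e2 : r + 1 + 1 - (l + 1) = r + 1 - l := by ring
      have e3 : j + (l + 1) = j + 1 + l := by ring
      rw [e1, e2, e3]
    rw [Finset.sum_congr rfl hsum]
    have hIH := IH (j + 1)
    have e4 : j + 1 + r = j + (r + 1) := by ring
    rw [e4] at hIH
    have e5 : (σ (j + 1 - 1) : ℂ) = (σ j : ℂ) := by norm_num
    rw [e5]
    have e6 : r + 1 + 1 - (1 : ℤ) = r + 1 := by ring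
    rw [e6]
    linear_combination -hkey + hIH

/-- identity `V_{r,j} = ṽ_{j+r} + h Σ_{ℓ=1}^{r} σ_{j+ℓ−1} Ψ̂^{(r+1−ℓ)}_{j+ℓ}`,
where `ṽ_j = V_{0,j}`. -/
theorem stmt12
    (p : ℕ) (hp : 1 ≤ p) (h : ℝ) (hh : 0 < h)
    (a : ℤ → ℝ) (hsym : ∀ r : ℤ, a (-r) = a r)
    (ω : ℝ) (hω : ω ≠ 0)
    (σ : ℤ → ℝ) (hσ : ∀ j : ℤ, 0 ≤ σ j) (hσneg : ∀ j : ℤ, j < 0 → σ j = 0)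
    (V : ℤ → ℤ → ℂ) (hholo : DiscreteHolo h ω σ V)
    (heq : ∀ j k : ℤ, (∑ r ∈ Finset.Icc (-(p : ℤ)) (p : ℤ), (a r : ℂ) * V (j + r) k) +
        (ω : ℂ) ^ 2 * V j k = 0)
    (j : ℤ) (r : ℤ) (hr1 : 1 ≤ r) (hrp : r ≤ (p : ℤ)) :
    V r j = V 0 (j + r) +
      (h : ℂ) * ∑ l ∈ Finset.Icc (1 : ℤ) r,
        (σ (j + l - 1) : ℂ) * PsiAux h ω σ V (r + 1 - l) (j + l) := by
  exact mainlem h ω hh hω σ hσneg V hholo r (by omega) j
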